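/- arXiv:2507.14927 — 3 statements merged into one kernel-verified Lean document; each statement's English description precedes it below -/
import Mathlib

section
/- If X : [t₀, T) → M_n(ℝ) is differentiable and satisfies X'(t) + A(t)·X(t) + X(t)·B(t) = F(t) with X(t₀) = X₀, then for all t in [t₀, T): det X(t) = exp(-∫_{t₀}^t tr(A(ξ)+B(ξ)) dξ) · ( ∫_{t₀}^t tr(adj(X(s))·F(s)) · exp(∫_{t₀}^s tr(A(ξ)+B(ξ)) dξ) ds + det X₀ ). -/
open Matrix intervalIntegral

lemma aux_sum_det {n : ℕ} (M N : Matrix (Fin n) (Fin n) ℝ) :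
    ∑ i, (M.updateCol i (fun k => N k i)).det = (M.adjugate * N).trace := by
  simp only [← Matrix.cramer_apply, Matrix.cramer_eq_adjugate_mulVec, Matrix.mulVec,
    dotProduct, Matrix.trace, Matrix.diag, Matrix.mul_apply]

lemma jacobi {n : ℕ} {M : ℝ → Matrix (Fin n) (Fin n) ℝ} {N : Matrix (Fin n) (Fin n) ℝ} {x : ℝ}
    (h : ∀ i j, HasDerivAt (fun s => M s i j) (N i j) x) :
    HasDerivAt (fun s => (M s).det) ((Matrix.adjugate (M x) * N).trace) x := by
  have hprod : ∀ σ : Equiv.Perm (Fin n), HasDerivAt (fun s => ∏ i, M s (σ i) i)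
      (∑ i, (∏ j ∈ Finset.univ.erase i, M x (σ j) j) * N (σ i) i) x := by
    intro σ
    have := HasDerivAt.fun_finsetProd (u := Finset.univ) (f := fun i s => M s (σ i) i)
      (f' := fun i => N (σ i) i) (x := x) (fun i _ => h (σ i) i)
    simpa [smul_eq_mul] using this
  have H : HasDerivAt (fun s => (M s).det)
      (∑ σ : Equiv.Perm (Fin n), ((Equiv.Perm.sign σ : ℤ) : ℝ) *
        ∑ i, (∏ j ∈ Finset.univ.erase i, M x (σ j) j) * N (σ i) i) x := by
    simp only [Matrix.det_apply']
    exact HasDerivAt.fun_sum fun σ _ => (hprod σ).const_mul _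
  convert H using 1
  calc (Matrix.adjugate (M x) * N).trace
      = ∑ i, ((M x).updateCol i (fun k => N k i)).det := (aux_sum_det _ _).symm
    _ = ∑ i, ∑ σ : Equiv.Perm (Fin n), ((Equiv.Perm.sign σ : ℤ) : ℝ) *
          ∏ j, ((M x).updateCol i (fun k => N k i)) (σ j) j := by
        simp only [Matrix.det_apply']
    _ = _ := by
        rw [Finset.sum_comm]
        refine Finset.sum_congr rfl fun σ _ => ?_
        rw [Finset.mul_sum]
        refine Finset.sum_congr rfl fun i _ => ?_
        have : ∏ j, ((M x).updateCol i (fun k => N k i)) (σ j) j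
            = N (σ i) i * ∏ j ∈ Finset.univ.erase i, M x (σ j) j := by
          rw [← Finset.mul_prod_erase Finset.univ _ (Finset.mem_univ i)]
          congr 1
          · simp [Matrix.updateCol_apply]
          · exact Finset.prod_congr rfl fun j hj => by
              simp [Matrix.updateCol_apply, (Finset.mem_erase.mp hj).1]
        rw [this]; ring

lemma trace_adj_mul_left {n : ℕ} (M P : Matrix (Fin n) (Fin n) ℝ) :
    (M.adjugate * (P * M)).trace = M.det * P.trace := by
  rw [Matrix.trace_mul_comm, Matrix.mul_assoc, Matrix.mul_adjugate, Matrix.mul_smul,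
    Matrix.mul_one, Matrix.trace_smul, smul_eq_mul]

lemma trace_adj_mul_right {n : ℕ} (M P : Matrix (Fin n) (Fin n) ℝ) :
    (M.adjugate * (M * P)).trace = M.det * P.trace := by
  rw [← Matrix.mul_assoc, Matrix.adjugate_mul, Matrix.smul_mul, Matrix.one_mul,
    Matrix.trace_smul, smul_eq_mul]

theorem stmt_1 {n : ℕ} (t₀ T : ℝ) (X X' A B F : ℝ → Matrix (Fin n) (Fin n) ℝ)
    (X₀ : Matrix (Fin n) (Fin n) ℝ)
    (hA : ContinuousOn A (Set.Ico t₀ T)) (hB : ContinuousOn B (Set.Ico t₀ T))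
    (hF : ContinuousOn F (Set.Ico t₀ T))
    (hX : ∀ t ∈ Set.Ico t₀ T, ∀ i j, HasDerivAt (fun s => X s i j) (X' t i j) t)
    (hODE : ∀ t ∈ Set.Ico t₀ T, X' t + A t * X t + X t * B t = F t)
    (hX0 : X t₀ = X₀) :
    ∀ t ∈ Set.Ico t₀ T,
      (X t).det = Real.exp (-∫ ξ in t₀..t, (A ξ + B ξ).trace) *
        ((∫ s in t₀..t, ((X s).adjugate * F s).trace *
            Real.exp (∫ ξ in t₀..s, (A ξ + B ξ).trace)) + X₀.det) := by
  intro t ht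
  obtain ⟨ht₀, htT⟩ := ht
  have hIccsub : Set.Icc t₀ t ⊆ Set.Ico t₀ T := fun s hs => ⟨hs.1, lt_of_le_of_lt hs.2 htT⟩
  set g : ℝ → ℝ := fun s => ∫ ξ in t₀..s, (A ξ + B ξ).trace with hg
  -- continuity facts
  have htrc : ContinuousOn (fun ξ => (A ξ + B ξ).trace) (Set.Ico t₀ T) :=
    (continuous_id.matrix_trace).comp_continuousOn (hA.add hB)
  have hXc : ContinuousOn X (Set.Ico t₀ T) := fun s hs =>
    (continuousAt_pi.mpr fun i => continuousAt_pi.mpr fun j =>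
      (hX s hs i j).continuousAt).continuousWithinAt
  have hgc : ContinuousOn g (Set.Icc t₀ t) := by
    have hint : MeasureTheory.IntegrableOn (fun ξ => (A ξ + B ξ).trace) (Set.uIcc t₀ t) := by
      rw [Set.uIcc_of_le ht₀]
      exact (htrc.mono hIccsub).integrableOn_compact isCompact_Icc
    have := intervalIntegral.continuousOn_primitive_interval hint
    rwa [Set.uIcc_of_le ht₀] at this
  have hdetc : ContinuousOn (fun s => (X s).det) (Set.Ico t₀ T) :=
    (continuous_id.matrix_det).comp_continuousOn hXc
  have hadjc : ContinuousOn (fun s => (Matrix.adjugate (X s) * F s).trace) (Set.Ico t₀ T) :=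
    (continuous_id.matrix_trace).comp_continuousOn
      (((continuous_id.matrix_adjugate).comp_continuousOn hXc).mul hF)
  have hmemx : ∀ x ∈ Set.Ioo t₀ t, x ∈ Set.Ico t₀ T := fun x hx => ⟨hx.1.le, hx.2.trans htT⟩
  -- derivatives at interior points
  have hg' : ∀ x ∈ Set.Ioo t₀ t, HasDerivAt g ((A x + B x).trace) x := by
    intro x hx
    have hxIoo : x ∈ Set.Ioo t₀ T := ⟨hx.1, hx.2.trans htT⟩
    refine intervalIntegral.integral_hasDerivAt_right ?_ ?_ ?_
    · apply ContinuousOn.intervalIntegrable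
      apply htrc.mono
      rw [Set.uIcc_of_le hx.1.le]
      exact fun s hs => ⟨hs.1, lt_of_le_of_lt hs.2 hxIoo.2⟩
    · exact (htrc.mono Set.Ioo_subset_Ico_self).stronglyMeasurableAtFilter isOpen_Ioo x hxIoo
    · exact htrc.continuousAt (mem_nhds_iff.mpr
        ⟨Set.Ioo t₀ T, Set.Ioo_subset_Ico_self, isOpen_Ioo, hxIoo⟩)
  have key : ∀ x ∈ Set.Ioo t₀ t,
      HasDerivAt (fun s => (X s).det * Real.exp (g s))
        ((Matrix.adjugate (X x) * F x).trace * Real.exp (g x)) x := by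
    intro x hx
    have hu' : HasDerivAt (fun s => (X s).det)
        ((Matrix.adjugate (X x) * X' x).trace) x :=
      jacobi (fun i j => hX x (hmemx x hx) i j)
    have hD := hu'.mul ((hg' x hx).exp)
    refine hD.congr_deriv ?_
    have hX'eq : X' x = F x - A x * X x - X x * B x := by
      have h := hODE x (hmemx x hx)
      rw [← h]; noncomm_ring
    rw [hX'eq, Matrix.mul_sub, Matrix.mul_sub, Matrix.trace_sub, Matrix.trace_sub,
      trace_adj_mul_left, trace_adj_mul_right, Matrix.trace_add]
    ring
  -- FTC
  have hFTC : (∫ s in t₀..t, (Matrix.adjugate (X s) * F s).trace * Real.exp (g s))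
      = (X t).det * Real.exp (g t) - (X t₀).det * Real.exp (g t₀) :=
    intervalIntegral.integral_eq_sub_of_hasDeriv_right_of_le ht₀
      ((hdetc.mono hIccsub).mul (Real.continuous_exp.comp_continuousOn hgc))
      (fun x hx => (key x hx).hasDerivWithinAt)
      (by
        apply ContinuousOn.intervalIntegrable
        rw [Set.uIcc_of_le ht₀]
        exact (hadjc.mono hIccsub).mul (Real.continuous_exp.comp_continuousOn hgc))
  have hgt₀ : g t₀ = 0 := intervalIntegral.integral_same
  rw [hgt₀, Real.exp_zero, mul_one, hX0] at hFTC
  show (X t).det = Real.exp (-(g t)) *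
    ((∫ s in t₀..t, (Matrix.adjugate (X s) * F s).trace * Real.exp (g s)) + X₀.det)
  rw [hFTC, sub_add_cancel, Real.exp_neg]
  field_simp
end

section
/- If X : [t₀, T) → M_n(ℝ) is differentiable, invertible for every t, and satisfies X'(t) + A(t)·X(t) + X(t)·B(t) = F(t) with X(t₀) = X₀, then det X(t) = det X₀ · exp( ∫_{t₀}^t ( tr(X(s)⁻¹·F(s)) − tr(A(s)) − tr(B(s)) ) ds ) for all t in [t₀, T). -/
open Matrix intervalIntegral

/-- Cofactor expansion of the determinant of a column update. -/
lemma det_updateColumn_eq_aux {n : ℕ} (M : Matrix (Fin n) (Fin n) ℝ) (k : Fin n)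
    (b : Fin n → ℝ) :
    (M.updateCol k b).det = ∑ a, M.adjugate k a * b a := by
  have h1 := congrFun (Matrix.cramer_eq_adjugate_mulVec M b) k
  rw [Matrix.cramer_apply] at h1
  rw [h1, Matrix.mulVec, dotProduct]

/-- Jacobi's formula: the derivative of the determinant. -/
lemma hasDerivAt_det_aux {n : ℕ} {X : ℝ → Matrix (Fin n) (Fin n) ℝ}
    {M' : Matrix (Fin n) (Fin n) ℝ} {t : ℝ}
    (h : ∀ i j, HasDerivAt (fun s => X s i j) (M' i j) t) :
    HasDerivAt (fun s => (X s).det) (((X t).adjugate * M').trace) t := by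
  have h2 : HasDerivAt
      (fun s => ∑ σ : Equiv.Perm (Fin n), ((Equiv.Perm.sign σ : ℤ) : ℝ) * ∏ i, X s (σ i) i)
      (∑ σ : Equiv.Perm (Fin n), ((Equiv.Perm.sign σ : ℤ) : ℝ) *
        ∑ k, (∏ j ∈ Finset.univ.erase k, X t (σ j) j) • M' (σ k) k) t :=
    HasDerivAt.fun_sum fun σ _ => (HasDerivAt.fun_finsetProd fun i _ => h (σ i) i).const_mul _
  have hfun : (fun s => (X s).det)
      = fun s => ∑ σ : Equiv.Perm (Fin n), ((Equiv.Perm.sign σ : ℤ) : ℝ) * ∏ i, X s (σ i) i :=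
    funext fun s => Matrix.det_apply' _
  rw [hfun]
  convert h2 using 1
  have hswap : ∀ σ : Equiv.Perm (Fin n),
      ((Equiv.Perm.sign σ : ℤ) : ℝ) *
        ∑ k, (∏ j ∈ Finset.univ.erase k, X t (σ j) j) • M' (σ k) k
      = ∑ k, ((Equiv.Perm.sign σ : ℤ) : ℝ) *
          ((∏ j ∈ Finset.univ.erase k, X t (σ j) j) * M' (σ k) k) := by
    intro σ
    rw [Finset.mul_sum]
    simp [smul_eq_mul]
  simp only [hswap]
  rw [Finset.sum_comm]
  rw [Matrix.trace]
  refine Finset.sum_congr rfl fun k _ => ?_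
  have hdet : ((X t).updateCol k fun a => M' a k).det
      = ∑ σ : Equiv.Perm (Fin n), ((Equiv.Perm.sign σ : ℤ) : ℝ) *
          ((∏ j ∈ Finset.univ.erase k, X t (σ j) j) * M' (σ k) k) := by
    rw [Matrix.det_apply']
    refine Finset.sum_congr rfl fun σ _ => ?_
    congr 1
    rw [← Finset.mul_prod_erase Finset.univ _ (Finset.mem_univ k)]
    rw [Matrix.updateCol_self, mul_comm]
    congr 1
    refine Finset.prod_congr rfl fun i hi => ?_
    exact Matrix.updateCol_ne (Finset.ne_of_mem_erase hi)
  rw [← hdet, det_updateColumn_eq_aux]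
  simp [Matrix.diag, Matrix.mul_apply]

lemma trace_adjugate_mul_aux {n : ℕ} (M M' : Matrix (Fin n) (Fin n) ℝ)
    (h : IsUnit M.det) :
    (M.adjugate * M').trace = M.det * (M⁻¹ * M').trace := by
  have hne : M.det ≠ 0 := h.ne_zero
  have hadj : M.adjugate = M.det • M⁻¹ := by
    rw [Matrix.inv_def, smul_smul, Ring.inverse_eq_inv', mul_inv_cancel₀ hne, one_smul]
  rw [hadj, Matrix.smul_mul, Matrix.trace_smul, smul_eq_mul]

theorem stmt_2 {n : ℕ} (t₀ T : ℝ) (X X' A B F : ℝ → Matrix (Fin n) (Fin n) ℝ)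
    (X₀ : Matrix (Fin n) (Fin n) ℝ)
    (hA : ContinuousOn A (Set.Ico t₀ T)) (hB : ContinuousOn B (Set.Ico t₀ T))
    (hF : ContinuousOn F (Set.Ico t₀ T))
    (hX : ∀ t ∈ Set.Ico t₀ T, ∀ i j, HasDerivAt (fun s => X s i j) (X' t i j) t)
    (hInv : ∀ t ∈ Set.Ico t₀ T, IsUnit (X t))
    (hODE : ∀ t ∈ Set.Ico t₀ T, X' t + A t * X t + X t * B t = F t)
    (hX0 : X t₀ = X₀) :
    ∀ t ∈ Set.Ico t₀ T,
      (X t).det = X₀.det *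
        Real.exp (∫ s in t₀..t,
          (((X s)⁻¹ * F s).trace - (A s).trace - (B s).trace)) := by
  intro t ht
  obtain ⟨ht₀, htT⟩ := ht
  set g : ℝ → ℝ := fun s => ((X s)⁻¹ * F s).trace - (A s).trace - (B s).trace with hg_def
  -- continuity of X on Ico
  have hXct : ∀ s ∈ Set.Ico t₀ T, ContinuousAt X s := by
    intro s hs
    refine continuousAt_pi.mpr ?_
    intro i
    rw [continuousAt_pi]
    intro j
    exact (hX s hs i j).continuousAt
  have hXinv : ∀ s ∈ Set.Ico t₀ T, ContinuousAt (fun u => (X u)⁻¹) s := by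
    intro s hs
    have hu : IsUnit (X s).det := (Matrix.isUnit_iff_isUnit_det _).mp (hInv s hs)
    exact ((continuousAt_matrix_inv (X s)
      (by simpa using NormedRing.inverse_continuousAt hu.unit)).comp (hXct s hs))
  have trace_cont : Continuous (Matrix.trace : Matrix (Fin n) (Fin n) ℝ → ℝ) :=
    continuous_id.matrix_trace
  have hgc : ContinuousOn g (Set.Ico t₀ T) := by
    refine ContinuousOn.sub (ContinuousOn.sub ?_ ?_) ?_
    · exact trace_cont.comp_continuousOn
        ((ContinuousOn.mul (fun s hs => (hXinv s hs).continuousWithinAt) hF))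
    · exact trace_cont.comp_continuousOn hA
    · exact trace_cont.comp_continuousOn hB
  -- derivative of the determinant
  have hdet : ∀ s ∈ Set.Ico t₀ T,
      HasDerivAt (fun u => (X u).det) (g s * (X s).det) s := by
    intro s hs
    have hu : IsUnit (X s).det := (Matrix.isUnit_iff_isUnit_det _).mp (hInv s hs)
    have h1 := hasDerivAt_det_aux (X := X) (M' := X' s) (t := s) (fun i j => hX s hs i j)
    convert h1 using 1
    rw [trace_adjugate_mul_aux _ _ hu]
    have hX' : X' s = F s - A s * X s - X s * B s := by
      have h0 := hODE s hs
      calc X' s = X' s + A s * X s + X s * B s - A s * X s - X s * B s := by abel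
        _ = F s - A s * X s - X s * B s := by rw [h0]
    rw [hX']
    have h2 : (X s)⁻¹ * (F s - A s * X s - X s * B s)
        = (X s)⁻¹ * F s - (X s)⁻¹ * (A s * X s) - (X s)⁻¹ * (X s * B s) := by
      noncomm_ring
    rw [h2, Matrix.trace_sub, Matrix.trace_sub]
    have h3 : ((X s)⁻¹ * (A s * X s)).trace = (A s).trace := by
      rw [Matrix.trace_mul_comm, Matrix.mul_assoc, Matrix.mul_nonsing_inv _ hu, Matrix.mul_one]
    have h4 : ((X s)⁻¹ * (X s * B s)).trace = (B s).trace := by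
      rw [← Matrix.mul_assoc, Matrix.nonsing_inv_mul _ hu, Matrix.one_mul]
    rw [h3, h4, hg_def]
    ring
  -- the scalar ODE argument
  have hsub : Set.Icc t₀ t ⊆ Set.Ico t₀ T := fun x hx => ⟨hx.1, lt_of_le_of_lt hx.2 htT⟩
  set G : ℝ → ℝ := fun u => ∫ s in t₀..u, g s with hG_def
  have hint : ∀ x ∈ Set.Icc t₀ t, IntervalIntegrable g MeasureTheory.volume t₀ x := by
    intro x hx
    apply ContinuousOn.intervalIntegrable
    apply hgc.mono
    rw [Set.uIcc_of_le hx.1]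
    exact fun y hy => hsub ⟨hy.1, le_trans hy.2 hx.2⟩
  have hGcont : ContinuousOn G (Set.Icc t₀ t) := by
    have hio : MeasureTheory.IntegrableOn g (Set.uIcc t₀ t) MeasureTheory.volume := by
      rw [Set.uIcc_of_le ht₀]
      exact (hgc.mono hsub).integrableOn_Icc
    have := intervalIntegral.continuousOn_primitive_interval hio
    rwa [Set.uIcc_of_le ht₀] at this
  have hGderiv : ∀ x ∈ Set.Ico t₀ t, HasDerivWithinAt G (g x) (Set.Ici x) x := by
    intro x hx
    have hxI : x ∈ Set.Ico t₀ T := ⟨hx.1, lt_trans hx.2 htT⟩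
    have hmem : Set.Ico t₀ T ∈ nhdsWithin x (Set.Ioi x) := by
      apply Filter.mem_of_superset (Ioo_mem_nhdsGT_of_mem (⟨le_refl x, hxI.2⟩ : x ∈ Set.Ico x T))
      exact fun y hy => ⟨le_trans hxI.1 (le_of_lt hy.1), hy.2⟩
    exact intervalIntegral.integral_hasDerivWithinAt_right
      (hint x ⟨hx.1, le_of_lt hx.2⟩)
      ⟨Set.Ico t₀ T, hmem, hgc.aestronglyMeasurable measurableSet_Ico⟩
      ((hgc x hxI).mono_of_mem_nhdsWithin hmem)
  -- the function H = det X · exp (-G) is constant on [t₀, t]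
  have hHcont : ContinuousOn (fun u => (X u).det * Real.exp (-G u)) (Set.Icc t₀ t) := by
    refine ContinuousOn.mul ?_ (Real.continuous_exp.comp_continuousOn hGcont.neg)
    exact fun x hx => ((hdet x (hsub hx)).continuousAt).continuousWithinAt
  have hHderiv : ∀ x ∈ Set.Ico t₀ t,
      HasDerivWithinAt (fun u => (X u).det * Real.exp (-G u)) 0 (Set.Ici x) x := by
    intro x hx
    have hxI : x ∈ Set.Ico t₀ T := ⟨hx.1, lt_trans hx.2 htT⟩
    have hd1 : HasDerivWithinAt (fun u => (X u).det) (g x * (X x).det) (Set.Ici x) x :=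
      (hdet x hxI).hasDerivWithinAt
    have hd2 : HasDerivWithinAt (fun u => Real.exp (-G u))
        (Real.exp (-G x) * (-g x)) (Set.Ici x) x := ((hGderiv x hx).neg).exp
    have := hd1.fun_mul hd2
    exact this.congr_deriv (by ring)
  have hconst := constant_of_has_deriv_right_zero hHcont hHderiv t ⟨ht₀, le_refl t⟩
  have hGt₀ : G t₀ = 0 := intervalIntegral.integral_same
  rw [hGt₀, neg_zero, Real.exp_zero, mul_one, hX0] at hconst
  calc (X t).det = (X t).det * (Real.exp (-G t) * Real.exp (G t)) := by
        rw [← Real.exp_add, neg_add_cancel, Real.exp_zero, mul_one]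
    _ = ((X t).det * Real.exp (-G t)) * Real.exp (G t) := by ring
    _ = X₀.det * Real.exp (G t) := by rw [hconst]
end

section
/- If X : [t₀, T) → M_n(ℝ) is differentiable and satisfies X'(t) + A(t)·X(t) = F(t) with X(t₀) = X₀ (the case B = 0), then det X(t) = exp(-∫_{t₀}^t tr A(ξ) dξ) · ( ∫_{t₀}^t tr(adj(X(s))·F(s)) · exp(∫_{t₀}^s tr A(ξ) dξ) ds + det X₀ ). -/
open Matrix intervalIntegral

open MeasureTheory in
private lemma det_updateCol_adj {n : ℕ} (M : Matrix (Fin n) (Fin n) ℝ)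
    (i : Fin n) (b : Fin n → ℝ) :
    (M.updateCol i b).det = ∑ j, M.adjugate i j * b j := by
  rw [← Matrix.cramer_apply, Matrix.cramer_eq_adjugate_mulVec]
  simp [Matrix.mulVec, dotProduct]

private lemma jacobi_sum {n : ℕ} (M D : Matrix (Fin n) (Fin n) ℝ) :
    ∑ σ : Equiv.Perm (Fin n), ((Equiv.Perm.sign σ : ℤ) : ℝ) *
      ∑ i, (∏ j ∈ Finset.univ.erase i, M (σ j) j) * D (σ i) i
    = (M.adjugate * D).trace := by
  have h1 : ∀ i : Fin n, (M.updateCol i fun k => D k i).det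
      = ∑ σ : Equiv.Perm (Fin n), ((Equiv.Perm.sign σ : ℤ) : ℝ) *
          ((∏ j ∈ Finset.univ.erase i, M (σ j) j) * D (σ i) i) := by
    intro i
    rw [Matrix.det_apply']
    refine Finset.sum_congr rfl fun σ _ => ?_
    rw [← Finset.mul_prod_erase Finset.univ _ (Finset.mem_univ i)]
    have hp : ∏ j ∈ Finset.univ.erase i, (M.updateCol i fun k => D k i) (σ j) j
        = ∏ j ∈ Finset.univ.erase i, M (σ j) j :=
      Finset.prod_congr rfl fun j hj => by
        rw [Matrix.updateCol_apply, if_neg (Finset.ne_of_mem_erase hj)]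
    rw [hp, Matrix.updateCol_apply, if_pos rfl]
    ring
  calc ∑ σ : Equiv.Perm (Fin n), ((Equiv.Perm.sign σ : ℤ) : ℝ) *
        ∑ i, (∏ j ∈ Finset.univ.erase i, M (σ j) j) * D (σ i) i
      = ∑ σ : Equiv.Perm (Fin n), ∑ i, ((Equiv.Perm.sign σ : ℤ) : ℝ) *
          ((∏ j ∈ Finset.univ.erase i, M (σ j) j) * D (σ i) i) := by
        simp [Finset.mul_sum]
    _ = ∑ i, ∑ σ : Equiv.Perm (Fin n), ((Equiv.Perm.sign σ : ℤ) : ℝ) *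
          ((∏ j ∈ Finset.univ.erase i, M (σ j) j) * D (σ i) i) := Finset.sum_comm
    _ = ∑ i, (M.updateCol i fun k => D k i).det := by
        simp [h1]
    _ = (M.adjugate * D).trace := by
        simp [det_updateCol_adj, Matrix.trace, Matrix.diag, Matrix.mul_apply]

/-- Jacobi's formula: the derivative of the determinant. -/
private lemma hasDerivAt_det_matrix {n : ℕ} (X : ℝ → Matrix (Fin n) (Fin n) ℝ)
    (D : Matrix (Fin n) (Fin n) ℝ) (t : ℝ)
    (h : ∀ i j, HasDerivAt (fun s => X s i j) (D i j) t) :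
    HasDerivAt (fun s => (X s).det) (((X t).adjugate * D).trace) t := by
  have hσ : ∀ σ : Equiv.Perm (Fin n), HasDerivAt (fun s => ∏ i, X s (σ i) i)
      (∑ i, (∏ j ∈ Finset.univ.erase i, X t (σ j) j) * D (σ i) i) t := by
    intro σ
    have := HasDerivAt.fun_finsetProd (u := Finset.univ)
      (f := fun i s => X s (σ i) i) (f' := fun i => D (σ i) i)
      (fun i _ => h (σ i) i)
    simpa [smul_eq_mul] using this
  have hsum : HasDerivAt
      (fun s => ∑ σ : Equiv.Perm (Fin n),
        ((Equiv.Perm.sign σ : ℤ) : ℝ) * ∏ i, X s (σ i) i)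
      (∑ σ : Equiv.Perm (Fin n), ((Equiv.Perm.sign σ : ℤ) : ℝ) *
        ∑ i, (∏ j ∈ Finset.univ.erase i, X t (σ j) j) * D (σ i) i) t :=
    HasDerivAt.fun_sum fun σ _ => (hσ σ).const_mul _
  have heq : (fun s => (X s).det) = fun s => ∑ σ : Equiv.Perm (Fin n),
      ((Equiv.Perm.sign σ : ℤ) : ℝ) * ∏ i, X s (σ i) i := by
    funext s; rw [Matrix.det_apply']
  rw [heq, ← jacobi_sum (X t) D]
  exact hsum

private lemma trace_adj_mul_mul {n : ℕ} (M B : Matrix (Fin n) (Fin n) ℝ) :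
    (M.adjugate * (B * M)).trace = M.det * B.trace := by
  rw [Matrix.trace_mul_comm, Matrix.mul_assoc, Matrix.mul_adjugate, Matrix.mul_smul,
    Matrix.mul_one, Matrix.trace_smul, smul_eq_mul, mul_comm]

private lemma mem_nhdsWithin_Ioi_of_Ico' {t₀ T x : ℝ} (hx : x ∈ Set.Ico t₀ T) :
    Set.Ico t₀ T ∈ nhdsWithin x (Set.Ioi x) := by
  rw [mem_nhdsWithin]
  exact ⟨Set.Iio T, isOpen_Iio, hx.2,
    fun y hy => ⟨le_of_lt (lt_of_le_of_lt hx.1 hy.2), hy.1⟩⟩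

open MeasureTheory in
private lemma primitive_hasDerivWithinAt' {t₀ T x : ℝ} {h : ℝ → ℝ}
    (hc : ContinuousOn h (Set.Ico t₀ T)) (hx : x ∈ Set.Ico t₀ T) :
    HasDerivWithinAt (fun u => ∫ s in t₀..u, h s) (h x) (Set.Ici x) x := by
  have hsub : Set.uIcc t₀ x ⊆ Set.Ico t₀ T := by
    rw [Set.uIcc_of_le hx.1]
    exact fun y hy => ⟨hy.1, lt_of_le_of_lt hy.2 hx.2⟩
  have hint : IntervalIntegrable h MeasureTheory.volume t₀ x :=
    (hc.mono hsub).intervalIntegrable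
  have hmeas : StronglyMeasurableAtFilter h (nhdsWithin x (Set.Ioi x)) :=
    ⟨Set.Ico t₀ T, mem_nhdsWithin_Ioi_of_Ico' hx, hc.aestronglyMeasurable measurableSet_Ico⟩
  have hcont : ContinuousWithinAt h (Set.Ioi x) x :=
    (hc x hx).mono_of_mem_nhdsWithin (mem_nhdsWithin_Ioi_of_Ico' hx)
  exact intervalIntegral.integral_hasDerivWithinAt_right hint hmeas hcont

open MeasureTheory in
private lemma primitive_continuousOn' {t₀ T : ℝ} {h : ℝ → ℝ}
    (hc : ContinuousOn h (Set.Ico t₀ T)) :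
    ContinuousOn (fun u => ∫ s in t₀..u, h s) (Set.Ico t₀ T) := by
  intro x hx
  obtain ⟨x', hxx', hx'T⟩ := exists_between hx.2
  have ht₀x' : t₀ ≤ x' := le_of_lt (lt_of_le_of_lt hx.1 hxx')
  have hsub : Set.uIcc t₀ x' ⊆ Set.Ico t₀ T := by
    rw [Set.uIcc_of_le ht₀x']
    exact fun y hy => ⟨hy.1, lt_of_le_of_lt hy.2 hx'T⟩
  have hint : IntervalIntegrable h MeasureTheory.volume t₀ x' :=
    (hc.mono hsub).intervalIntegrable
  have hconton := intervalIntegral.continuousOn_primitive_interval' hint Set.left_mem_uIcc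
  have hmem : Set.uIcc t₀ x' ∈ nhdsWithin x (Set.Ico t₀ T) := by
    rw [mem_nhdsWithin]
    refine ⟨Set.Iio x', isOpen_Iio, hxx', fun y hy => ?_⟩
    rw [Set.uIcc_of_le ht₀x']
    exact ⟨hy.2.1, le_of_lt hy.1⟩
  have hxmem : x ∈ Set.uIcc t₀ x' := by
    rw [Set.uIcc_of_le ht₀x']; exact ⟨hx.1, le_of_lt hxx'⟩
  exact (hconton x hxmem).mono_of_mem_nhdsWithin hmem

set_option maxHeartbeats 1000000 in
theorem stmt_10 {n : ℕ} (t₀ T : ℝ) (X X' A F : ℝ → Matrix (Fin n) (Fin n) ℝ)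
    (X₀ : Matrix (Fin n) (Fin n) ℝ)
    (hA : ContinuousOn A (Set.Ico t₀ T)) (hF : ContinuousOn F (Set.Ico t₀ T))
    (hX : ∀ t ∈ Set.Ico t₀ T, ∀ i j, HasDerivAt (fun s => X s i j) (X' t i j) t)
    (hODE : ∀ t ∈ Set.Ico t₀ T, X' t + A t * X t = F t)
    (hX0 : X t₀ = X₀) :
    ∀ t ∈ Set.Ico t₀ T,
      (X t).det = Real.exp (-∫ ξ in t₀..t, (A ξ).trace) *
        ((∫ s in t₀..t, ((X s).adjugate * F s).trace *
            Real.exp (∫ ξ in t₀..s, (A ξ).trace)) + X₀.det) := by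
  have htrace : Continuous fun M : Matrix (Fin n) (Fin n) ℝ => M.trace :=
    continuous_id.matrix_trace
  have hτc : ContinuousOn (fun ξ => (A ξ).trace) (Set.Ico t₀ T) :=
    htrace.comp_continuousOn hA
  have hXon : ContinuousOn X (Set.Ico t₀ T) := fun x hx =>
    (continuousAt_pi.2 fun i => continuousAt_pi.2 fun j =>
      (hX x hx i j).continuousAt).continuousWithinAt
  have hAdjF : ContinuousOn (fun s => ((X s).adjugate * F s).trace) (Set.Ico t₀ T) :=
    htrace.comp_continuousOn
      ((continuous_id.matrix_adjugate.comp_continuousOn hXon).mul hF)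
  have hEc : ContinuousOn (fun s => Real.exp (∫ ξ in t₀..s, (A ξ).trace)) (Set.Ico t₀ T) :=
    Real.continuous_exp.comp_continuousOn (primitive_continuousOn' hτc)
  have hρc : ContinuousOn (fun s => ((X s).adjugate * F s).trace *
      Real.exp (∫ ξ in t₀..s, (A ξ).trace)) (Set.Ico t₀ T) := hAdjF.mul hEc
  have hdetc : ContinuousOn (fun s => (X s).det) (Set.Ico t₀ T) :=
    continuous_id.matrix_det.comp_continuousOn hXon
  have hIc : ContinuousOn (fun u => ∫ s in t₀..u, ((X s).adjugate * F s).trace *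
      Real.exp (∫ ξ in t₀..s, (A ξ).trace)) (Set.Ico t₀ T) := primitive_continuousOn' hρc
  intro t ht
  have hsub : Set.Icc t₀ t ⊆ Set.Ico t₀ T := fun y hy => ⟨hy.1, lt_of_le_of_lt hy.2 ht.2⟩
  have hφcont : ContinuousOn (fun u => (X u).det * Real.exp (∫ ξ in t₀..u, (A ξ).trace) -
      (∫ s in t₀..u, ((X s).adjugate * F s).trace *
        Real.exp (∫ ξ in t₀..s, (A ξ).trace)) - X₀.det) (Set.Icc t₀ t) :=
    ((((hdetc.mono hsub).mul (hEc.mono hsub)).sub (hIc.mono hsub)).sub continuousOn_const)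
  have hderiv : ∀ x ∈ Set.Ico t₀ t,
      HasDerivWithinAt (fun u => (X u).det * Real.exp (∫ ξ in t₀..u, (A ξ).trace) -
        (∫ s in t₀..u, ((X s).adjugate * F s).trace *
          Real.exp (∫ ξ in t₀..s, (A ξ).trace)) - X₀.det) 0 (Set.Ici x) x := by
    intro x hx
    have hxI : x ∈ Set.Ico t₀ T := ⟨hx.1, lt_trans hx.2 ht.2⟩
    have hdet := hasDerivAt_det_matrix X (X' x) x (hX x hxI)
    have hg := primitive_hasDerivWithinAt' hτc hxI
    have hE : HasDerivWithinAt (fun u => Real.exp (∫ ξ in t₀..u, (A ξ).trace))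
        (Real.exp (∫ ξ in t₀..x, (A ξ).trace) * (A x).trace) (Set.Ici x) x := hg.exp
    have hI := primitive_hasDerivWithinAt' hρc hxI
    have hmain := ((hdet.hasDerivWithinAt.mul hE).sub hI).sub_const X₀.det
    have hX' : X' x = F x - A x * X x := eq_sub_of_add_eq (hODE x hxI)
    have htr : ((X x).adjugate * X' x).trace
        = ((X x).adjugate * F x).trace - (X x).det * (A x).trace := by
      rw [hX', Matrix.mul_sub, Matrix.trace_sub, trace_adj_mul_mul]
    exact hmain.congr_deriv (by rw [htr]; ring)
  have hconst := constant_of_has_deriv_right_zero hφcont hderiv t (Set.right_mem_Icc.2 ht.1)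
  simp only [intervalIntegral.integral_same, Real.exp_zero, hX0, mul_one, sub_zero] at hconst
  have hne := Real.exp_ne_zero (∫ ξ in t₀..t, (A ξ).trace)
  rw [Real.exp_neg, inv_mul_eq_div, eq_div_iff hne]
  linarith
end
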